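/- Let X be a complex manifold, D a hypersurface with defining holomorphic function s, and let σ be a holomorphic function on a neighborhood of a point q ∈ D. Suppose there is a sequence of points q_j → q with q_j ∉ D, lying on a smooth real path through q transversal to D, such that for every δ > 0 there exists C_δ > 0 with |s(q_j)|^{2δ} ≤ C_δ·|σ(q_j)|² for all j. Then σ(q) ≠ 0. -/

import Mathlib

open Filter

theorem stmt_5 {n : ℕ} (s σ : EuclideanSpace ℂ (Fin n) → ℂ)
    (q : EuclideanSpace ℂ (Fin n))
    (hs : AnalyticAt ℂ s q) (hσ : AnalyticAt ℂ σ q)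
    (qj : ℕ → EuclideanSpace ℂ (Fin n))
    (htend : Tendsto qj atTop (nhds q))
    (hsq : s q = 0) (hnotD : ∀ j, s (qj j) ≠ 0)
    (c : ℝ) (hc : 0 < c)
    (htrans : ∀ j, c * dist (qj j) q ≤ ‖s (qj j)‖)
    (hdom : ∀ δ > (0:ℝ), ∃ Cδ > (0:ℝ), ∀ j,
      ‖s (qj j)‖ ^ (2 * δ) ≤ Cδ * ‖σ (qj j)‖ ^ 2) :
    σ q ≠ 0 := by
  intro hσq
  obtain ⟨Cδ, hCδ, hdm⟩ := hdom (1/4) (by norm_num)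
  have hbig := hσ.differentiableAt.hasFDerivAt.isBigO_sub
  obtain ⟨K, hK⟩ := hbig.bound
  have hev : ∀ᶠ j in atTop, ‖σ (qj j)‖ ≤ K * dist (qj j) q := by
    filter_upwards [htend.eventually hK] with j h
    simpa [hσq, dist_eq_norm] using h
  set M := Cδ * K ^ 2 with hM
  have key : ∀ᶠ j in atTop,
      Real.sqrt c ≤ M * (dist (qj j) q * Real.sqrt (dist (qj j) q)) := by
    filter_upwards [hev] with j h
    set d := dist (qj j) q with hdj
    have hd0 : 0 < d := dist_pos.2 (fun h' => hnotD j (h' ▸ hsq))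
    have h1 : Real.sqrt (c * d) ≤ Real.sqrt (‖s (qj j)‖) :=
      Real.sqrt_le_sqrt (htrans j)
    have h2 : (‖s (qj j)‖) ^ ((2:ℝ) * (1/4)) ≤
        Cδ * (‖σ (qj j)‖) ^ 2 := hdm j
    have hrw : (‖s (qj j)‖) ^ ((2:ℝ) * (1/4)) =
        Real.sqrt (‖s (qj j)‖) := by
      rw [Real.sqrt_eq_rpow]; norm_num
    rw [hrw] at h2
    have h3 : (‖σ (qj j)‖) ^ 2 ≤ (K * d) ^ 2 :=
      pow_le_pow_left₀ (norm_nonneg _) h 2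
    have h4 : Real.sqrt c * Real.sqrt d ≤ Cδ * (K * d) ^ 2 := by
      rw [← Real.sqrt_mul hc.le]
      exact le_trans (le_trans h1 h2) (by nlinarith)
    have hsd : Real.sqrt d * Real.sqrt d = d := Real.mul_self_sqrt hd0.le
    have hsd0 : 0 < Real.sqrt d := Real.sqrt_pos.2 hd0
    have heq : M * (d * Real.sqrt d) * Real.sqrt d = Cδ * (K * d) ^ 2 := by
      linear_combination (Cδ * K ^ 2 * d) * hsd
    exact le_of_mul_le_mul_right (by rw [heq]; exact h4) hsd0
  have h0 : Tendsto (fun j => dist (qj j) q) atTop (nhds 0) :=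
    tendsto_iff_dist_tendsto_zero.1 htend
  have htd : Tendsto (fun j => M * (dist (qj j) q * Real.sqrt (dist (qj j) q)))
      atTop (nhds 0) := by
    have hcont : Continuous (fun x : ℝ => M * (x * Real.sqrt x)) :=
      continuous_const.mul (continuous_id.mul Real.continuous_sqrt)
    have := (hcont.tendsto 0).comp h0
    simpa [Function.comp_def] using this
  have hle : Real.sqrt c ≤ 0 := ge_of_tendsto htd key
  have : (0:ℝ) < Real.sqrt c := Real.sqrt_pos.2 hc
  linarith
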